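/- Let $1 \le p, q \le 2$. Then every block sequence $(f_j)$ of the biparameter Haar system in $H^p(H^q)$ satisfies the lower $2$-estimate with constant $1$: $\|\sum_{j=1}^n f_j\|_{H^p(H^q)} \ge (\sum_{j=1}^n \|f_j\|_{H^p(H^q)}^2)^{1/2}$. -/

import Mathlib

open Finset MeasureTheory

/-- The `L^∞`-normalized Haar function on the dyadic interval `[k/2^n, (k+1)/2^n)`. -/
noncomputable def haar (n k : ℕ) (x : ℝ) : ℝ :=
  if (k : ℝ) / 2 ^ n ≤ x ∧ x < ((k : ℝ) + 1 / 2) / 2 ^ n then 1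
  else if ((k : ℝ) + 1 / 2) / 2 ^ n ≤ x ∧ x < ((k : ℝ) + 1) / 2 ^ n then -1
  else 0

/-- The biparameter Haar function `h_{I,J}(x,y) = h_I(x) h_J(y)`. -/
noncomputable def haar2 (I J : ℕ × ℕ) (x y : ℝ) : ℝ := haar I.1 I.2 x * haar J.1 J.2 y

/-- The `H^p(H^q)` (mixed-norm Hardy space) norm of the finite linear combination
`∑_{IJ ∈ s} a IJ • h_{IJ}` of biparameter Haar functions, given by the square function formula
`(∫₀¹ (∫₀¹ (∑_{IJ ∈ s} a_{IJ}² h_{IJ}²(x,y))^{q/2} dy)^{p/q} dx)^{1/p}`. -/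
noncomputable def HpHqNorm (p q : ℝ) (s : Finset ((ℕ × ℕ) × (ℕ × ℕ)))
    (a : (ℕ × ℕ) × (ℕ × ℕ) → ℝ) : ℝ :=
  (∫ x in Set.Icc (0 : ℝ) 1,
      (∫ y in Set.Icc (0 : ℝ) 1,
        (∑ IJ ∈ s, (a IJ * haar2 IJ.1 IJ.2 x y) ^ 2) ^ (q / 2)) ^ (p / q)) ^ (1 / p)


open scoped ENNReal

lemma pt_ineq {r : ℝ} (hr0 : 0 < r) (hr1 : r ≤ 1) {l m : ℝ≥0∞} (hl0 : l ≠ 0) (hlt : l ≠ ⊤)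
    (hm0 : m ≠ 0) (hmt : m ≠ ⊤) (hlm : l + m = 1) (x y : ℝ≥0∞) :
    l ^ (1 - r) * x ^ r + m ^ (1 - r) * y ^ r ≤ (x + y) ^ r := by
  have hr0' : r ≠ 0 := hr0.ne'
  have hp : (1 : ℝ) ≤ 1 / r := by
    rw [le_div_iff₀ hr0]; linarith
  have h := ENNReal.rpow_arith_mean_le_arith_mean2_rpow l m ((x / l) ^ r) ((y / m) ^ r) hlm hp
  have hu : ((x / l) ^ r) ^ (1 / r) = x / l := by
    rw [← ENNReal.rpow_mul, mul_one_div_cancel hr0', ENNReal.rpow_one]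
  have hv : ((y / m) ^ r) ^ (1 / r) = y / m := by
    rw [← ENNReal.rpow_mul, mul_one_div_cancel hr0', ENNReal.rpow_one]
  rw [hu, hv, ENNReal.mul_div_cancel hl0 hlt, ENNReal.mul_div_cancel hm0 hmt] at h
  have h2 : l * (x / l) ^ r + m * (y / m) ^ r ≤ (x + y) ^ r := by
    have := ENNReal.rpow_le_rpow h hr0.le
    rwa [← ENNReal.rpow_mul, one_div_mul_cancel hr0', ENNReal.rpow_one] at this
  have hxl : l * (x / l) ^ r = l ^ (1 - r) * x ^ r := by
    rw [ENNReal.div_rpow_of_nonneg _ _ hr0.le, ENNReal.rpow_sub _ _ hl0 hlt, ENNReal.rpow_one,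
      div_eq_mul_inv, div_eq_mul_inv, ← mul_assoc]
    ring
  have hym : m * (y / m) ^ r = m ^ (1 - r) * y ^ r := by
    rw [ENNReal.div_rpow_of_nonneg _ _ hr0.le, ENNReal.rpow_sub _ _ hm0 hmt, ENNReal.rpow_one,
      div_eq_mul_inv, div_eq_mul_inv, ← mul_assoc]
    ring
  rwa [hxl, hym] at h2

lemma rev_mink2 {α : Type*} [MeasurableSpace α] {μ : Measure α} {r : ℝ} (hr0 : 0 < r)
    (hr1 : r ≤ 1) {f g : α → ℝ≥0∞} (hf : AEMeasurable f μ) (hg : AEMeasurable g μ) :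
    (∫⁻ a, f a ^ r ∂μ) ^ (1 / r) + (∫⁻ a, g a ^ r ∂μ) ^ (1 / r)
      ≤ (∫⁻ a, (f a + g a) ^ r ∂μ) ^ (1 / r) := by
  have hr0' : r ≠ 0 := hr0.ne'
  set A := (∫⁻ a, f a ^ r ∂μ) ^ (1 / r) with hA
  set B := (∫⁻ a, g a ^ r ∂μ) ^ (1 / r) with hB
  have hfr : AEMeasurable (fun a => f a ^ r) μ :=
    ENNReal.continuous_rpow_const.measurable.comp_aemeasurable hf
  have hgr : AEMeasurable (fun a => g a ^ r) μ :=
    ENNReal.continuous_rpow_const.measurable.comp_aemeasurable hg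
  have hAle : A ≤ (∫⁻ a, (f a + g a) ^ r ∂μ) ^ (1 / r) := by
    apply ENNReal.rpow_le_rpow _ (by positivity)
    exact lintegral_mono fun a => ENNReal.rpow_le_rpow le_self_add hr0.le
  have hBle : B ≤ (∫⁻ a, (f a + g a) ^ r ∂μ) ^ (1 / r) := by
    apply ENNReal.rpow_le_rpow _ (by positivity)
    exact lintegral_mono fun a => ENNReal.rpow_le_rpow le_add_self hr0.le
  rcases eq_or_ne A 0 with h0 | hA0
  · simpa [h0] using hBle
  rcases eq_or_ne B 0 with h0 | hB0
  · simpa [h0] using hAle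
  rcases eq_or_ne A ⊤ with htop | hAt
  · exact le_top.trans_eq (top_le_iff.mp (htop ▸ hAle)).symm
  rcases eq_or_ne B ⊤ with htop | hBt
  · exact le_top.trans_eq (top_le_iff.mp (htop ▸ hBle)).symm
  -- main case
  have hABne : A + B ≠ 0 := by simp [hA0]
  have hABt : A + B ≠ ⊤ := by simp [ENNReal.add_ne_top, hAt, hBt]
  set l := A / (A + B) with hl
  set m := B / (A + B) with hm
  have hl0 : l ≠ 0 := by simp [hl, ENNReal.div_eq_zero_iff, hA0, hABt]
  have hm0 : m ≠ 0 := by simp [hm, ENNReal.div_eq_zero_iff, hB0, hABt]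
  have hlt : l ≠ ⊤ := by simp [hl, ENNReal.div_eq_top, hAt, hABne]
  have hmt : m ≠ ⊤ := by simp [hm, ENNReal.div_eq_top, hBt, hABne]
  have hlm : l + m = 1 := by
    rw [hl, hm, ENNReal.div_add_div_same, ENNReal.div_self hABne hABt]
  have hIA : ∫⁻ a, f a ^ r ∂μ = A ^ r := by
    rw [hA, ← ENNReal.rpow_mul, one_div_mul_cancel hr0', ENNReal.rpow_one]
  have hIB : ∫⁻ a, g a ^ r ∂μ = B ^ r := by
    rw [hB, ← ENNReal.rpow_mul, one_div_mul_cancel hr0', ENNReal.rpow_one]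
  have hlne : l ^ (1 - r) ≠ ⊤ := ENNReal.rpow_ne_top_of_nonneg (by linarith) hlt
  have hmne : m ^ (1 - r) ≠ ⊤ := ENNReal.rpow_ne_top_of_nonneg (by linarith) hmt
  have key : (A + B) ^ r ≤ ∫⁻ a, (f a + g a) ^ r ∂μ := by
    have step : ∫⁻ a, l ^ (1 - r) * f a ^ r + m ^ (1 - r) * g a ^ r ∂μ
        ≤ ∫⁻ a, (f a + g a) ^ r ∂μ :=
      lintegral_mono fun a => pt_ineq hr0 hr1 hl0 hlt hm0 hmt hlm (f a) (g a)
    have eq1 : ∫⁻ a, l ^ (1 - r) * f a ^ r + m ^ (1 - r) * g a ^ r ∂μ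
        = l ^ (1 - r) * A ^ r + m ^ (1 - r) * B ^ r := by
      rw [lintegral_add_left' (hfr.const_mul _), lintegral_const_mul' _ _ hlne,
        lintegral_const_mul' _ _ hmne, hIA, hIB]
    have eq2 : l ^ (1 - r) * A ^ r + m ^ (1 - r) * B ^ r = (A + B) ^ r := by
      rw [hl, hm, ENNReal.div_rpow_of_nonneg _ _ (by linarith),
        ENNReal.div_rpow_of_nonneg _ _ (by linarith)]
      rw [div_eq_mul_inv, div_eq_mul_inv, mul_right_comm (A ^ (1-r)), mul_right_comm (B ^ (1-r)),
        ← ENNReal.rpow_add _ _ hA0 hAt, ← ENNReal.rpow_add _ _ hB0 hBt, sub_add_cancel,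
        ENNReal.rpow_one, ENNReal.rpow_one, ← add_mul, ← div_eq_mul_inv,
        ]
      have hpow : (A + B) ^ r * (A + B) ^ (1 - r) = A + B := by
        rw [← ENNReal.rpow_add _ _ hABne hABt]; norm_num
      have hne0 : (A + B) ^ (1 - r) ≠ 0 := by
        simp [ENNReal.rpow_eq_zero_iff, hABne, hABt]
      have hnet : (A + B) ^ (1 - r) ≠ ⊤ := ENNReal.rpow_ne_top_of_nonneg (by linarith) hABt
      symm
      rw [ENNReal.eq_div_iff hne0 hnet, mul_comm]
      exact hpow
    rw [← eq2, ← eq1]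
    exact step
  calc A + B = ((A + B) ^ r) ^ (1 / r) := by
        rw [← ENNReal.rpow_mul, mul_one_div_cancel hr0', ENNReal.rpow_one]
    _ ≤ (∫⁻ a, (f a + g a) ^ r ∂μ) ^ (1 / r) := ENNReal.rpow_le_rpow key (by positivity)

lemma rev_mink_sum {α ι : Type*} [MeasurableSpace α] {μ : Measure α} {r : ℝ} (hr0 : 0 < r)
    (hr1 : r ≤ 1) (t : Finset ι) (f : ι → α → ℝ≥0∞) (hf : ∀ i, AEMeasurable (f i) μ) :
    ∑ i ∈ t, (∫⁻ a, f i a ^ r ∂μ) ^ (1 / r) ≤ (∫⁻ a, (∑ i ∈ t, f i a) ^ r ∂μ) ^ (1 / r) := by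
  classical
  induction t using Finset.induction with
  | empty => simp
  | @insert i t hi ih =>
    rw [Finset.sum_insert hi]
    calc (∫⁻ a, f i a ^ r ∂μ) ^ (1 / r) + ∑ j ∈ t, (∫⁻ a, f j a ^ r ∂μ) ^ (1 / r)
        ≤ (∫⁻ a, f i a ^ r ∂μ) ^ (1 / r) + (∫⁻ a, (∑ j ∈ t, f j a) ^ r ∂μ) ^ (1 / r) :=
          add_le_add_right ih _
      _ ≤ (∫⁻ a, (f i a + ∑ j ∈ t, f j a) ^ r ∂μ) ^ (1 / r) :=
          rev_mink2 hr0 hr1 (hf i) (Finset.aemeasurable_fun_sum t fun j _ => hf j)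
      _ = (∫⁻ a, (∑ j ∈ insert i t, f j a) ^ r ∂μ) ^ (1 / r) := by
          simp [Finset.sum_insert hi]



lemma measurable_haar (n k : ℕ) : Measurable (haar n k) := by
  unfold haar
  refine Measurable.ite ?_ measurable_const (Measurable.ite ?_ measurable_const measurable_const)
  · exact measurableSet_Ico (a := (k : ℝ) / 2 ^ n) (b := ((k : ℝ) + 1 / 2) / 2 ^ n)
  · exact measurableSet_Ico (a := ((k : ℝ) + 1 / 2) / 2 ^ n) (b := ((k : ℝ) + 1) / 2 ^ n)

lemma haar_sq_le_one (n k : ℕ) (x : ℝ) : (haar n k x) ^ 2 ≤ 1 := by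
  unfold haar; split_ifs <;> norm_num

lemma haar2_sq_le_one (I J : ℕ × ℕ) (x y : ℝ) : (haar2 I J x y) ^ 2 ≤ 1 := by
  rw [haar2, mul_pow]
  calc haar I.1 I.2 x ^ 2 * haar J.1 J.2 y ^ 2 ≤ 1 * 1 :=
        mul_le_mul (haar_sq_le_one _ _ _) (haar_sq_le_one _ _ _) (sq_nonneg _) one_pos.le
    _ = 1 := mul_one 1

lemma measurable_haar2 (I J : ℕ × ℕ) : Measurable (fun z : ℝ × ℝ => haar2 I J z.1 z.2) :=
  ((measurable_haar I.1 I.2).comp measurable_fst).mul ((measurable_haar J.1 J.2).comp measurable_snd)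

/-- Conversion of the mixed-norm expression to `lintegral` form. -/
lemma mixed_eq_lintegral {p q : ℝ} (hp1 : 1 ≤ p) (hq1 : 1 ≤ q)
    (G : ℝ → ℝ → ℝ) (hG : Measurable (fun z : ℝ × ℝ => G z.1 z.2)) (hG0 : ∀ x y, 0 ≤ G x y)
    {C : ℝ} (hC : ∀ x y, G x y ≤ C) :
    (∫ x in Set.Icc (0 : ℝ) 1,
        (∫ y in Set.Icc (0 : ℝ) 1, G x y ^ (q / 2)) ^ (p / q)) ^ (1 / p)
      = ((∫⁻ x in Set.Icc (0 : ℝ) 1,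
          (∫⁻ y in Set.Icc (0 : ℝ) 1, ENNReal.ofReal (G x y) ^ (q / 2)) ^ (p / q)) ^ (1 / p)).toReal := by
  have hq2 : (0 : ℝ) ≤ q / 2 := by linarith
  have hpq : (0 : ℝ) ≤ p / q := by positivity
  set I := Set.Icc (0 : ℝ) 1
  set k : ℝ × ℝ → ℝ≥0∞ := fun z => ENNReal.ofReal (G z.1 z.2) ^ (q / 2) with hk
  have hkmeas : Measurable k :=
    ENNReal.continuous_rpow_const.measurable.comp hG.ennreal_ofReal
  have hklt : ∀ z, k z < ⊤ := fun z =>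
    ENNReal.rpow_lt_top_of_nonneg hq2 ENNReal.ofReal_ne_top
  set L : ℝ → ℝ≥0∞ := fun x => ∫⁻ y in I, k (x, y) with hL
  have hLmeas : Measurable L := hkmeas.lintegral_prod_right'
  have hIvol : (volume.restrict I) Set.univ = 1 := by
    rw [Measure.restrict_apply_univ]
    simp [I, Real.volume_Icc]
  have hLlt : ∀ x, L x < ⊤ := by
    intro x
    calc L x ≤ ∫⁻ _ in I, ENNReal.ofReal C ^ (q / 2) := by
          apply lintegral_mono
          intro y
          exact ENNReal.rpow_le_rpow (ENNReal.ofReal_le_ofReal (hC x y)) hq2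
      _ = ENNReal.ofReal C ^ (q / 2) := by rw [lintegral_const, hIvol, mul_one]
      _ < ⊤ := ENNReal.rpow_lt_top_of_nonneg hq2 ENNReal.ofReal_ne_top
  have inner_eq : ∀ x, (∫ y in I, G x y ^ (q / 2)) = (L x).toReal := by
    intro x
    have h1 : ∀ y, G x y ^ (q / 2) = (k (x, y)).toReal := by
      intro y
      show G x y ^ (q / 2) = (ENNReal.ofReal (G x y) ^ (q / 2)).toReal
      rw [ENNReal.ofReal_rpow_of_nonneg (hG0 x y) hq2,
        ENNReal.toReal_ofReal (Real.rpow_nonneg (hG0 x y) _)]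
    calc (∫ y in I, G x y ^ (q / 2)) = ∫ y in I, (k (x, y)).toReal := by
          exact integral_congr_ae (Filter.Eventually.of_forall fun y => h1 y)
      _ = (L x).toReal := by
          exact integral_toReal ((hkmeas.comp measurable_prodMk_left).aemeasurable)
            (Filter.Eventually.of_forall fun y => hklt _)
  have outer_eq : (∫ x in I, (∫ y in I, G x y ^ (q / 2)) ^ (p / q))
      = (∫⁻ x in I, L x ^ (p / q)).toReal := by
    calc (∫ x in I, (∫ y in I, G x y ^ (q / 2)) ^ (p / q))
        = ∫ x in I, (L x ^ (p / q)).toReal := by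
          refine integral_congr_ae (Filter.Eventually.of_forall fun x => ?_)
          dsimp only
          rw [inner_eq x, ENNReal.toReal_rpow]
      _ = (∫⁻ x in I, L x ^ (p / q)).toReal := by
          exact integral_toReal
            ((ENNReal.continuous_rpow_const.measurable.comp hLmeas).aemeasurable)
            (Filter.Eventually.of_forall fun x =>
              ENNReal.rpow_lt_top_of_nonneg hpq (hLlt x).ne)
  rw [outer_eq, ENNReal.toReal_rpow]



/-- Lower 2-estimate with constant 1 for block sequences (disjoint Haar spectra)
in `H^p(H^q)`, `1 ≤ p, q ≤ 2`. -/
theorem lower_two_estimate_HpHq (p q : ℝ) (hp1 : 1 ≤ p) (hp2 : p ≤ 2)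
    (hq1 : 1 ≤ q) (hq2 : q ≤ 2)
    (n : ℕ) (s : Fin n → Finset ((ℕ × ℕ) × (ℕ × ℕ)))
    (a : Fin n → (ℕ × ℕ) × (ℕ × ℕ) → ℝ)
    (hdisj : ∀ i j, i ≠ j → Disjoint (s i) (s j))
    (hnonzero : ∀ j, ∃ IJ ∈ s j, a j IJ ≠ 0) :
    (∑ j, HpHqNorm p q (s j) (a j) ^ 2) ^ ((1 : ℝ) / 2)
      ≤ HpHqNorm p q (Finset.univ.biUnion s)
          (fun IJ => ∑ j, if IJ ∈ s j then a j IJ else 0) := by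
  classical
  have hp0 : p ≠ 0 := by positivity
  have hq0 : q ≠ 0 := by positivity
  set I := Set.Icc (0 : ℝ) 1 with hI
  -- the block square functions
  set F : Fin n → ℝ → ℝ → ℝ :=
    fun j x y => ∑ IJ ∈ s j, (a j IJ * haar2 IJ.1 IJ.2 x y) ^ 2 with hF
  have hF0 : ∀ j x y, 0 ≤ F j x y := fun j x y =>
    Finset.sum_nonneg fun IJ _ => sq_nonneg _
  have hFC : ∀ j x y, F j x y ≤ ∑ IJ ∈ s j, (a j IJ) ^ 2 := by
    intro j x y
    refine Finset.sum_le_sum fun IJ _ => ?_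
    rw [mul_pow]
    exact mul_le_of_le_one_right (sq_nonneg _) (haar2_sq_le_one _ _ _ _)
  have hFmeas : ∀ j, Measurable (fun z : ℝ × ℝ => F j z.1 z.2) := by
    intro j
    apply Finset.measurable_sum
    intro IJ _
    exact ((measurable_const.mul (measurable_haar2 IJ.1 IJ.2)).pow_const 2)
  -- the combined square function equals the sum of block square functions
  have hsum : ∀ x y,
      (∑ IJ ∈ Finset.univ.biUnion s,
        ((∑ j, if IJ ∈ s j then a j IJ else 0) * haar2 IJ.1 IJ.2 x y) ^ 2)
      = ∑ j, F j x y := by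
    intro x y
    rw [Finset.sum_biUnion (fun i _ j _ hij => hdisj i j hij)]
    refine Finset.sum_congr rfl fun j _ => ?_
    refine Finset.sum_congr rfl fun IJ hIJ => ?_
    congr 1
    have : (∑ j', if IJ ∈ s j' then a j' IJ else 0) = a j IJ := by
      rw [Finset.sum_eq_single j]
      · rw [if_pos hIJ]
      · intro j' _ hj'
        rw [if_neg]
        exact fun h => (Finset.disjoint_left.mp (hdisj j' j hj')) h hIJ
      · intro h; exact absurd (Finset.mem_univ j) h
    rw [this]
  -- ENNReal versions
  set SS : Fin n → ℝ → ℝ → ℝ≥0∞ := fun j x y => ENNReal.ofReal (F j x y) with hSS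
  have hSSmeas : ∀ j, Measurable (fun z : ℝ × ℝ => SS j z.1 z.2) := fun j =>
    (hFmeas j).ennreal_ofReal
  set inner : Fin n → ℝ → ℝ≥0∞ := fun j x => ∫⁻ y in I, SS j x y ^ (q / 2) with hinner
  set innertot : ℝ → ℝ≥0∞ := fun x => ∫⁻ y in I, (∑ j, SS j x y) ^ (q / 2) with hinnertot
  set Nj : Fin n → ℝ≥0∞ := fun j => (∫⁻ x in I, inner j x ^ (p / q)) ^ (1 / p) with hNj
  set Ntot : ℝ≥0∞ := (∫⁻ x in I, innertot x ^ (p / q)) ^ (1 / p) with hNtot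
  -- conversions
  have hconvj : ∀ j, HpHqNorm p q (s j) (a j) = (Nj j).toReal := by
    intro j
    rw [HpHqNorm]
    exact mixed_eq_lintegral hp1 hq1 (F j) (hFmeas j) (hF0 j) (hFC j)
  have hconvtot : HpHqNorm p q (Finset.univ.biUnion s)
      (fun IJ => ∑ j, if IJ ∈ s j then a j IJ else 0) = Ntot.toReal := by
    rw [HpHqNorm]
    have hGmeas : Measurable (fun z : ℝ × ℝ =>
        ∑ IJ ∈ Finset.univ.biUnion s,
          ((∑ j, if IJ ∈ s j then a j IJ else 0) * haar2 IJ.1 IJ.2 z.1 z.2) ^ 2) := by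
      apply Finset.measurable_sum
      intro IJ _
      exact ((measurable_const.mul (measurable_haar2 IJ.1 IJ.2)).pow_const 2)
    have hG0 : ∀ x y, 0 ≤ ∑ IJ ∈ Finset.univ.biUnion s,
        ((∑ j, if IJ ∈ s j then a j IJ else 0) * haar2 IJ.1 IJ.2 x y) ^ 2 :=
      fun x y => Finset.sum_nonneg fun IJ _ => sq_nonneg _
    have hGC : ∀ x y, (∑ IJ ∈ Finset.univ.biUnion s,
        ((∑ j, if IJ ∈ s j then a j IJ else 0) * haar2 IJ.1 IJ.2 x y) ^ 2)
        ≤ ∑ j, ∑ IJ ∈ s j, (a j IJ) ^ 2 := by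
      intro x y
      rw [hsum x y]
      exact Finset.sum_le_sum fun j _ => hFC j x y
    rw [mixed_eq_lintegral hp1 hq1 _ hGmeas hG0 hGC]
    congr 1
    rw [hNtot]
    congr 1
    refine lintegral_congr fun x => ?_
    congr 1
    refine lintegral_congr fun y => ?_
    congr 1
    rw [hsum x y, ENNReal.ofReal_sum_of_nonneg fun j _ => hF0 j x y]
  -- exponent facts
  have hr1 : 0 < q / 2 := by linarith
  have hr1' : q / 2 ≤ 1 := by linarith
  have hr2 : 0 < p / 2 := by linarith
  have hr2' : p / 2 ≤ 1 := by linarith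
  have hodq : 1 / (q / 2) = 2 / q := one_div_div q 2 ▸ by rw [one_div_div]
  have hodp : 1 / (p / 2) = 2 / p := by rw [one_div_div]
  -- inner measurability
  have hinner_meas : ∀ j, Measurable (inner j) := by
    intro j
    apply Measurable.lintegral_prod_right'
      (f := fun z : ℝ × ℝ => SS j z.1 z.2 ^ (q / 2))
    exact ENNReal.continuous_rpow_const.measurable.comp (hSSmeas j)
  -- Step (i): pointwise reverse Minkowski in y
  have step1 : ∀ x, ∑ j, inner j x ^ ((2 : ℝ) / q) ≤ innertot x ^ ((2 : ℝ) / q) := by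
    intro x
    have := rev_mink_sum (μ := volume.restrict I) hr1 hr1' Finset.univ
      (fun j y => SS j x y)
      (fun j => ((hSSmeas j).comp measurable_prodMk_left).aemeasurable)
    rwa [hodq] at this
  -- Step (ii): reverse Minkowski in x
  have step2 : ∑ j, (∫⁻ x in I, (inner j x ^ ((2 : ℝ) / q)) ^ (p / 2)) ^ ((2 : ℝ) / p)
      ≤ (∫⁻ x in I, (∑ j, inner j x ^ ((2 : ℝ) / q)) ^ (p / 2)) ^ ((2 : ℝ) / p) := by
    have := rev_mink_sum (μ := volume.restrict I) hr2 hr2' Finset.univ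
      (fun j x => inner j x ^ ((2 : ℝ) / q))
      (fun j => (ENNReal.continuous_rpow_const.measurable.comp (hinner_meas j)).aemeasurable)
    rwa [hodp] at this
  -- exponent algebra
  have hexp : ((2 : ℝ) / q) * (p / 2) = p / q := by field_simp
  have hNj2 : ∀ j, Nj j ^ (2 : ℝ)
      = (∫⁻ x in I, (inner j x ^ ((2 : ℝ) / q)) ^ (p / 2)) ^ ((2 : ℝ) / p) := by
    intro j
    rw [hNj]
    rw [← ENNReal.rpow_mul]
    have : 1 / p * 2 = 2 / p := by field_simp
    rw [this]
    congr 1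
    refine lintegral_congr fun x => ?_
    rw [← ENNReal.rpow_mul, hexp]
  have hNtot2 : Ntot ^ (2 : ℝ)
      = (∫⁻ x in I, (innertot x ^ ((2 : ℝ) / q)) ^ (p / 2)) ^ ((2 : ℝ) / p) := by
    rw [hNtot, ← ENNReal.rpow_mul]
    have : 1 / p * 2 = 2 / p := by field_simp
    rw [this]
    congr 1
    refine lintegral_congr fun x => ?_
    rw [← ENNReal.rpow_mul, hexp]
  -- main ENNReal inequality
  have hmain : ∑ j, Nj j ^ (2 : ℝ) ≤ Ntot ^ (2 : ℝ) := by
    calc ∑ j, Nj j ^ (2 : ℝ)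
        = ∑ j, (∫⁻ x in I, (inner j x ^ ((2 : ℝ) / q)) ^ (p / 2)) ^ ((2 : ℝ) / p) := by
          exact Finset.sum_congr rfl fun j _ => hNj2 j
      _ ≤ (∫⁻ x in I, (∑ j, inner j x ^ ((2 : ℝ) / q)) ^ (p / 2)) ^ ((2 : ℝ) / p) := step2
      _ ≤ (∫⁻ x in I, (innertot x ^ ((2 : ℝ) / q)) ^ (p / 2)) ^ ((2 : ℝ) / p) := by
          apply ENNReal.rpow_le_rpow _ (by positivity)
          exact lintegral_mono fun x => ENNReal.rpow_le_rpow (step1 x) hr2.le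
      _ = Ntot ^ (2 : ℝ) := hNtot2.symm
  -- finiteness of Ntot
  have hIvol : (volume.restrict I) Set.univ = 1 := by
    rw [Measure.restrict_apply_univ]; simp [hI, Real.volume_Icc]
  have hNtot_ne : Ntot ≠ ⊤ := by
    set Ct : ℝ := ∑ j, ∑ IJ ∈ s j, (a j IJ) ^ 2 with hCt
    have hb1 : ∀ x y, ∑ j, SS j x y ≤ ENNReal.ofReal Ct := by
      intro x y
      calc ∑ j, SS j x y ≤ ∑ j, ENNReal.ofReal (∑ IJ ∈ s j, (a j IJ) ^ 2) :=
            Finset.sum_le_sum fun j _ => ENNReal.ofReal_le_ofReal (hFC j x y)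
        _ = ENNReal.ofReal Ct := by
            rw [hCt, ENNReal.ofReal_sum_of_nonneg]
            exact fun j _ => Finset.sum_nonneg fun IJ _ => sq_nonneg _
    have hb2 : ∀ x, innertot x ≤ ENNReal.ofReal Ct ^ (q / 2) := by
      intro x
      calc innertot x ≤ ∫⁻ _ in I, ENNReal.ofReal Ct ^ (q / 2) :=
            lintegral_mono fun y => ENNReal.rpow_le_rpow (hb1 x y) hr1.le
        _ = ENNReal.ofReal Ct ^ (q / 2) := by rw [lintegral_const, hIvol, mul_one]
    have hb3 : (∫⁻ x in I, innertot x ^ (p / q))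
        ≤ (ENNReal.ofReal Ct ^ (q / 2)) ^ (p / q) := by
      calc (∫⁻ x in I, innertot x ^ (p / q))
          ≤ ∫⁻ _ in I, (ENNReal.ofReal Ct ^ (q / 2)) ^ (p / q) :=
            lintegral_mono fun x => ENNReal.rpow_le_rpow (hb2 x) (by positivity)
        _ = (ENNReal.ofReal Ct ^ (q / 2)) ^ (p / q) := by rw [lintegral_const, hIvol, mul_one]
    rw [hNtot]
    apply ENNReal.rpow_ne_top_of_nonneg (by positivity)
    exact ne_top_of_le_ne_top
      (ENNReal.rpow_ne_top_of_nonneg (by positivity)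
        (ENNReal.rpow_ne_top_of_nonneg (by linarith) ENNReal.ofReal_ne_top)) hb3
  have hNtot2_ne : Ntot ^ (2 : ℝ) ≠ ⊤ := ENNReal.rpow_ne_top_of_nonneg (by norm_num) hNtot_ne
  have hsum_ne : ∑ j, Nj j ^ (2 : ℝ) ≠ ⊤ := ne_top_of_le_ne_top hNtot2_ne hmain
  have hNj_ne : ∀ j, Nj j ≠ ⊤ := by
    intro j hj
    have h1 : Nj j ^ (2 : ℝ) ≤ ∑ j', Nj j' ^ (2 : ℝ) :=
      Finset.single_le_sum (f := fun j' => Nj j' ^ (2 : ℝ)) (fun j' _ => zero_le) (Finset.mem_univ j)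
    rw [hj, ENNReal.top_rpow_of_pos (by norm_num)] at h1
    exact hsum_ne (top_le_iff.mp h1)
  -- convert npow 2 to rpow 2
  have hpow_eq : ∀ x : ℝ≥0∞, x ^ (2 : ℕ) = x ^ (2 : ℝ) := by
    intro x
    rw [← ENNReal.rpow_natCast x 2]
    norm_num
  -- assemble
  rw [hconvtot]
  have hLHS : (∑ j, HpHqNorm p q (s j) (a j) ^ 2)
      = ((∑ j, Nj j ^ (2 : ℕ)) : ℝ≥0∞).toReal := by
    rw [ENNReal.toReal_sum (fun j _ => by
      rw [hpow_eq]
      exact ENNReal.rpow_ne_top_of_nonneg (by norm_num) (hNj_ne j))]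
    refine Finset.sum_congr rfl fun j _ => ?_
    rw [hconvj j, ← ENNReal.toReal_pow]
  rw [hLHS, ENNReal.toReal_rpow]
  apply ENNReal.toReal_mono hNtot_ne
  calc (∑ j, Nj j ^ (2 : ℕ)) ^ ((1 : ℝ) / 2)
      ≤ (Ntot ^ (2 : ℝ)) ^ ((1 : ℝ) / 2) := by
        apply ENNReal.rpow_le_rpow _ (by norm_num)
        calc ∑ j, Nj j ^ (2 : ℕ) = ∑ j, Nj j ^ (2 : ℝ) :=
              Finset.sum_congr rfl fun j _ => hpow_eq _
          _ ≤ Ntot ^ (2 : ℝ) := hmain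
    _ = Ntot := by
        rw [← ENNReal.rpow_mul]
        norm_num
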